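/- arXiv:1809.00470 — 3 statements merged into one kernel-verified Lean document; each statement's English description precedes it below -/
import Mathlib

section
/- Let A₀ be a unital complex *-algebra, H a complex Hilbert space, π : A₀ → B(H) a unital star-algebra homomorphism into the bounded linear operators on H, ξ ∈ H, and δ : A₀ → A₀ a qu*-derivation. Assume that ⟨π(δ(x))ξ, ξ⟩ = 0 for every x ∈ A₀. Then for all x, y ∈ A₀ one has ⟨π(δ(x))ξ, π(y)ξ⟩ = −⟨π(x)ξ, π(δ(y))ξ⟩. -/
open Topology Filter

/-- Let `A₀` be a unital complex *-algebra, `H` a complex Hilbert space,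
`π : A₀ → B(H)` a unital star-algebra homomorphism, `ξ ∈ H`, and `δ : A₀ → A₀` a
qu*-derivation (a linear map with `δ(x*) = δ(x)*` and `δ(xy) = δ(x)y + xδ(y)`).
If `⟨π(δ(x))ξ, ξ⟩ = 0` for every `x`, then
`⟨π(δ(x))ξ, π(y)ξ⟩ = −⟨π(x)ξ, π(δ(y))ξ⟩` for all `x, y`. -/
theorem stmt0 (A : Type*) [Ring A] [StarRing A] [Algebra ℂ A] [StarModule ℂ A]
    (H : Type*) [NormedAddCommGroup H] [InnerProductSpace ℂ H] [CompleteSpace H]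
    (π : A →⋆ₐ[ℂ] (H →L[ℂ] H)) (ξ : H)
    (δ : A →ₗ[ℂ] A)
    (hδstar : ∀ x : A, δ (star x) = star (δ x))
    (hδmul : ∀ x y : A, δ (x * y) = δ x * y + x * δ y)
    (hω : ∀ x : A, (inner ℂ (π (δ x) ξ) ξ : ℂ) = 0) :
    ∀ x y : A, (inner ℂ (π (δ x) ξ) (π y ξ) : ℂ) = -(inner ℂ (π x ξ) (π (δ y) ξ) : ℂ) := by
  intro x y
  have h := hω (star y * x)
  rw [hδmul, map_add, map_mul, map_mul, hδstar, map_star, map_star,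
    ContinuousLinearMap.add_apply] at h
  simp only [ContinuousLinearMap.mul_apply, ContinuousLinearMap.star_eq_adjoint] at h
  rw [inner_add_left, ContinuousLinearMap.adjoint_inner_left,
    ContinuousLinearMap.adjoint_inner_left] at h
  linear_combination h
end

section
/- Let A₀ be a unital complex *-algebra, H a complex Hilbert space, π : A₀ → B(H) a unital star-algebra homomorphism, ξ ∈ H a cyclic vector for π (i.e., the linear span of {π(y)ξ : y ∈ A₀} is dense in H), and δ : A₀ → A₀ a qu*-derivation with ⟨π(δ(x))ξ, ξ⟩ = 0 for every x ∈ A₀. Then for every x ∈ A₀ with π(x)ξ = 0 one has π(δ(x))ξ = 0; in other words, the assignment π(x)ξ ↦ i·π(δ(x))ξ is a well-defined linear map on the dense subspace π(A₀)ξ. -/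
open Topology Filter

/-- Let `A₀` be a unital complex *-algebra, `H` a complex Hilbert space,
`π : A₀ → B(H)` a unital star-algebra homomorphism, `ξ` a cyclic vector for `π`, and
`δ : A₀ → A₀` a qu*-derivation with `⟨π(δ(x))ξ, ξ⟩ = 0` for every `x`.  Then for every
`x` with `π(x)ξ = 0` one has `π(δ(x))ξ = 0`, i.e. `π(x)ξ ↦ i·π(δ(x))ξ` is well defined
on the dense subspace `π(A₀)ξ`. -/
theorem stmt1 (A : Type*) [Ring A] [StarRing A] [Algebra ℂ A] [StarModule ℂ A]
    (H : Type*) [NormedAddCommGroup H] [InnerProductSpace ℂ H] [CompleteSpace H]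
    (π : A →⋆ₐ[ℂ] (H →L[ℂ] H)) (ξ : H)
    (hcyc : Dense ((Submodule.span ℂ (Set.range fun y : A => π y ξ) : Submodule ℂ H) : Set H))
    (δ : A →ₗ[ℂ] A)
    (hδstar : ∀ x : A, δ (star x) = star (δ x))
    (hδmul : ∀ x y : A, δ (x * y) = δ x * y + x * δ y)
    (hω : ∀ x : A, (inner ℂ (π (δ x) ξ) ξ : ℂ) = 0) :
    ∀ x : A, π x ξ = 0 → π (δ x) ξ = 0 := by
  intro x hx
  set v := π (δ x) ξ with hv
  have hω' : ∀ z : A, (inner ℂ ξ (π (δ z) ξ) : ℂ) = 0 := by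
    intro z
    rw [← inner_conj_symm, hω z, map_zero]
  -- v is orthogonal to every π y ξ
  have key : ∀ y : A, (inner ℂ (π y ξ) v : ℂ) = 0 := by
    intro y
    have hadj : (inner ℂ (π y ξ) v : ℂ) = inner ℂ ξ (π (star y * δ x) ξ) := by
      rw [map_mul]
      have h1 : π (star y) = ContinuousLinearMap.adjoint (π y) := by
        rw [map_star]; rfl
      rw [ContinuousLinearMap.mul_apply, h1,
        ContinuousLinearMap.adjoint_inner_right]
    have hsplit : star y * δ x = δ (star y * x) - δ (star y) * x := by
      rw [hδmul]; abel
    rw [hadj, hsplit, map_sub, ContinuousLinearMap.sub_apply, inner_sub_right,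
      hω' (star y * x), map_mul, ContinuousLinearMap.mul_apply,
      hx, map_zero, inner_zero_right, sub_zero]
  -- v is orthogonal to the dense span, hence v = 0
  have hspan : ∀ w ∈ (Submodule.span ℂ (Set.range fun y : A => π y ξ) : Submodule ℂ H),
      (inner ℂ w v : ℂ) = 0 := by
    intro w hw
    induction hw using Submodule.span_induction with
    | mem w hw => obtain ⟨y, rfl⟩ := hw; exact key y
    | zero => simp
    | add a b _ _ ha hb => rw [inner_add_left, ha, hb, add_zero]
    | smul c a _ ha => rw [inner_smul_left, ha, mul_zero]
  have hall : ∀ w : H, (inner ℂ w v : ℂ) = 0 := by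
    have hc : Continuous fun w : H => (inner ℂ w v : ℂ) :=
      continuous_inner.comp (Continuous.prodMk continuous_id continuous_const)
    exact fun w => congrFun (Continuous.ext_on hcyc hc continuous_const hspan) w
  have : (inner ℂ v v : ℂ) = 0 := hall v
  exact inner_self_eq_zero.mp this
end

section
/- Let A₀ be a unital complex *-algebra, H a complex Hilbert space, π : A₀ → B(H) a unital star-algebra homomorphism, ξ ∈ H a cyclic vector for π (the linear span D = span{π(y)ξ : y ∈ A₀} is dense in H), and δ : A₀ → A₀ a qu*-derivation with ⟨π(δ(x))ξ, ξ⟩ = 0 for every x ∈ A₀. Then there exists a densely defined linear operator T with domain D such that: (a) T(π(x)ξ) = i·π(δ(x))ξ for every x ∈ A₀; (b) T is symmetric, i.e. ⟨Tu, v⟩ = ⟨u, Tv⟩ for all u, v ∈ D; and (c) for every x ∈ A₀ and every v ∈ D, the vector π(x)v lies in D and π(δ(x))v = −i·(T(π(x)v) − π(x)(Tv)), i.e. π(δ(x)) = −i[T, π(x)] on D. -/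
open Topology Filter

/-- In the setting of a unital star-representation `π : A₀ → B(H)` with
cyclic vector `ξ` and a qu*-derivation `δ` whose range is annihilated by the vector
functional `a ↦ ⟨π(a)ξ, ξ⟩`, there is a densely defined linear operator `T` on the dense
domain `D = span{π(y)ξ : y ∈ A₀}` such that `T(π(x)ξ) = i·π(δ(x))ξ`, `T` is symmetric,
and `π(δ(x)) = −i[T, π(x)]` on `D`. -/
theorem stmt2 (A : Type*) [Ring A] [StarRing A] [Algebra ℂ A] [StarModule ℂ A]
    (H : Type*) [NormedAddCommGroup H] [InnerProductSpace ℂ H] [CompleteSpace H]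
    (π : A →⋆ₐ[ℂ] (H →L[ℂ] H)) (ξ : H)
    (hcyc : Dense ((Submodule.span ℂ (Set.range fun y : A => π y ξ) : Submodule ℂ H) : Set H))
    (δ : A →ₗ[ℂ] A)
    (hδstar : ∀ x : A, δ (star x) = star (δ x))
    (hδmul : ∀ x y : A, δ (x * y) = δ x * y + x * δ y)
    (hω : ∀ x : A, (inner ℂ (π (δ x) ξ) ξ : ℂ) = 0) :
    ∃ T : (Submodule.span ℂ (Set.range fun y : A => π y ξ)) →ₗ[ℂ] H,
      (∀ x : A, T ⟨π x ξ, Submodule.subset_span ⟨x, rfl⟩⟩ = Complex.I • π (δ x) ξ) ∧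
      (∀ u v : Submodule.span ℂ (Set.range fun y : A => π y ξ),
        (inner ℂ (T u) (v : H) : ℂ) = inner ℂ (u : H) (T v)) ∧
      ∃ hmem : ∀ (x : A) (v : Submodule.span ℂ (Set.range fun y : A => π y ξ)),
          π x (v : H) ∈ Submodule.span ℂ (Set.range fun y : A => π y ξ),
        ∀ (x : A) (v : Submodule.span ℂ (Set.range fun y : A => π y ξ)),
          π (δ x) (v : H) = (-Complex.I) • (T ⟨π x (v : H), hmem x v⟩ - π x (T v)) := by
  classical
  set D := (Submodule.span ℂ (Set.range fun y : A => π y ξ)) with hDdef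
  let e : A →ₗ[ℂ] H :=
    { toFun := fun x => π x ξ
      map_add' := fun x y => by simp [map_add]
      map_smul' := fun c x => by simp [map_smul] }
  let L : A →ₗ[ℂ] H :=
    { toFun := fun x => Complex.I • π (δ x) ξ
      map_add' := fun x y => by simp [map_add, smul_add]
      map_smul' := fun c x => by
        simp [map_smul, smul_smul, mul_comm] }
  have he : ∀ x, e x = π x ξ := fun _ => rfl
  have hL : ∀ x, L x = Complex.I • π (δ x) ξ := fun _ => rfl
  have key : ∀ x y : A, (inner ℂ (π (δ x) ξ) (π y ξ) : ℂ) = - inner ℂ (π x ξ) (π (δ y) ξ) := by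
    intro x y
    have h1 : (inner ℂ (π (δ x) ξ) (π y ξ) : ℂ) = inner ℂ (π (star y * δ x) ξ) ξ := by
      have hy : π (star y) = ContinuousLinearMap.adjoint (π y) := by
        rw [map_star, ContinuousLinearMap.star_eq_adjoint]
      rw [map_mul, hy]
      simp [ContinuousLinearMap.adjoint_inner_left]
    have h2 : star y * δ x = δ (star y * x) - δ (star y) * x := by
      rw [hδmul]; abel
    have h3 : (inner ℂ (π (δ (star y) * x) ξ) ξ : ℂ) = inner ℂ (π x ξ) (π (δ y) ξ) := by
      have hy : π (δ (star y)) = ContinuousLinearMap.adjoint (π (δ y)) := by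
        rw [hδstar, map_star, ContinuousLinearMap.star_eq_adjoint]
      rw [map_mul, hy]
      simp [ContinuousLinearMap.adjoint_inner_left]
    rw [h1, h2, map_sub]
    simp only [ContinuousLinearMap.sub_apply, inner_sub_left, hω (star y * x), h3, zero_sub]
  have hker : LinearMap.ker e ≤ LinearMap.ker L := by
    intro x hx
    have hx0 : π x ξ = 0 := hx
    set w := π (δ x) ξ with hw
    have hzero : ∀ y : A, (inner ℂ w (π y ξ) : ℂ) = 0 := by
      intro y
      rw [hw, key x y, hx0]
      simp
    have hspan : D ≤ (innerSL ℂ w).ker := by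
      rw [hDdef]
      refine Submodule.span_le.2 ?_
      rintro _ ⟨y, rfl⟩
      simpa using hzero y
    have hclosed : IsClosed (((innerSL ℂ w).ker : Submodule ℂ H) : Set H) :=
      ContinuousLinearMap.isClosed_ker _
    have huniv : (Set.univ : Set H) ⊆ ((innerSL ℂ w).ker : Submodule ℂ H) := by
      rw [← hcyc.closure_eq]
      exact closure_minimal hspan hclosed
    have hw0 : w = 0 := by
      have := huniv (Set.mem_univ w)
      have : (inner ℂ w w : ℂ) = 0 := this
      exact inner_self_eq_zero.1 this
    show L x = 0
    rw [hL, ← hw, hw0, smul_zero]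
  have hD : D = LinearMap.range e := by
    apply le_antisymm
    · rw [hDdef]
      refine Submodule.span_le.2 ?_
      rintro _ ⟨y, rfl⟩
      exact ⟨y, rfl⟩
    · rintro _ ⟨y, rfl⟩
      exact Submodule.subset_span ⟨y, rfl⟩
  let T : D →ₗ[ℂ] H :=
    ((LinearMap.ker e).liftQ L hker).comp
      (((LinearMap.quotKerEquivRange e).symm.toLinearMap).comp
        (LinearEquiv.ofEq D (LinearMap.range e) hD).toLinearMap)
  have hT : ∀ (v : D) (x : A), (v : H) = π x ξ → T v = Complex.I • π (δ x) ξ := by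
    intro v x hv
    have h1 : (LinearEquiv.ofEq D (LinearMap.range e) hD) v = ⟨e x, LinearMap.mem_range_self e x⟩ := by
      apply Subtype.ext
      simpa [he] using hv
    show ((LinearMap.ker e).liftQ L hker)
        ((LinearMap.quotKerEquivRange e).symm ((LinearEquiv.ofEq D (LinearMap.range e) hD) v))
        = Complex.I • π (δ x) ξ
    rw [h1, LinearMap.quotKerEquivRange_symm_apply_image]
    rfl
  have hrep : ∀ v : D, ∃ x : A, π x ξ = (v : H) := by
    intro v
    exact hD.le v.2
  have hmem : ∀ (x : A) (v : D), π x (v : H) ∈ D := by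
    intro x v
    obtain ⟨y, hy⟩ := hrep v
    exact hD.ge ⟨x * y, by rw [he, map_mul, ContinuousLinearMap.mul_apply, hy]⟩
  refine ⟨T, ?_, ?_, hmem, ?_⟩
  · intro x
    exact hT _ x rfl
  · intro u v
    obtain ⟨x, hx⟩ := hrep u
    obtain ⟨y, hy⟩ := hrep v
    rw [hT u x hx.symm, hT v y hy.symm, ← hx, ← hy, inner_smul_left, inner_smul_right,
      key x y]
    simp [Complex.conj_I]
  · intro x v
    obtain ⟨y, hy⟩ := hrep v
    have h1 : T ⟨π x (v : H), hmem x v⟩ = Complex.I • π (δ (x * y)) ξ := by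
      refine hT _ (x * y) ?_
      show π x (v : H) = π (x * y) ξ
      rw [map_mul, ContinuousLinearMap.mul_apply, hy]
    have h2 : T v = Complex.I • π (δ y) ξ := hT v y hy.symm
    have h3 : π (δ (x * y)) ξ = π (δ x) (π y ξ) + π x (π (δ y) ξ) := by
      rw [hδmul, map_add, map_mul, map_mul]; rfl
    rw [h1, h2, ← hy, h3, map_smul, smul_sub, smul_smul, smul_smul, neg_mul,
      Complex.I_mul_I, neg_neg, one_smul, one_smul, add_sub_cancel_right]
end
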